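/- Suppose V has dimension 3 over ℝ. Then for every element U of the Clifford algebra Cl(Q), the product U·reverse(U)·involute(U)·reverse(involute(U)) is a scalar (lies in the range of the algebra map ℝ → Cl(Q)); it equals reverse(involute(U))·reverse(U)·involute(U)·U; and the four expressions reverse(U)·involute(U)·reverse(involute(U)), involute(U)·reverse(U)·reverse(involute(U)), reverse(involute(U))·involute(U)·reverse(U), and reverse(involute(U))·reverse(U)·involute(U) are all equal. -/

import Mathlib

open CliffordAlgebra

namespace CliffordAux

variable {V : Type*} [AddCommGroup V] [Module ℝ V] {Q : QuadraticForm ℝ V} {b : Fin 3 → V}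

/-- A general element of the Clifford algebra of a 3-dim space, in coordinates. -/
noncomputable def lin (Q : QuadraticForm ℝ V) (b : Fin 3 → V)
    (c0 c1 c2 c3 c4 c5 c6 c7 : ℝ) : CliffordAlgebra Q :=
  c0 • 1 + c1 • ι Q (b 0) + c2 • ι Q (b 1) + c3 • ι Q (b 2) +
    c4 • (ι Q (b 0) * ι Q (b 1)) + c5 • (ι Q (b 0) * ι Q (b 2)) +
    c6 • (ι Q (b 1) * ι Q (b 2)) + c7 • (ι Q (b 0) * (ι Q (b 1) * ι Q (b 2)))

theorem r00 : ι Q (b 0) * ι Q (b 0) = Q (b 0) • 1 := by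
  rw [ι_sq_scalar, Algebra.algebraMap_eq_smul_one]
theorem r11 : ι Q (b 1) * ι Q (b 1) = Q (b 1) • 1 := by
  rw [ι_sq_scalar, Algebra.algebraMap_eq_smul_one]
theorem r22 : ι Q (b 2) * ι Q (b 2) = Q (b 2) • 1 := by
  rw [ι_sq_scalar, Algebra.algebraMap_eq_smul_one]
theorem r00' (t : CliffordAlgebra Q) : ι Q (b 0) * (ι Q (b 0) * t) = Q (b 0) • t := by
  rw [← mul_assoc, r00, smul_mul_assoc, one_mul]
theorem r11' (t : CliffordAlgebra Q) : ι Q (b 1) * (ι Q (b 1) * t) = Q (b 1) • t := by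
  rw [← mul_assoc, r11, smul_mul_assoc, one_mul]
theorem r22' (t : CliffordAlgebra Q) : ι Q (b 2) * (ι Q (b 2) * t) = Q (b 2) • t := by
  rw [← mul_assoc, r22, smul_mul_assoc, one_mul]

section
variable (hb : ∀ i j : Fin 3, i ≠ j → Q.IsOrtho (b i) (b j))
include hb

theorem r10 : ι Q (b 1) * ι Q (b 0) = -(ι Q (b 0) * ι Q (b 1)) :=
  ι_mul_ι_comm_of_isOrtho (hb 1 0 (by decide))
theorem r20 : ι Q (b 2) * ι Q (b 0) = -(ι Q (b 0) * ι Q (b 2)) :=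
  ι_mul_ι_comm_of_isOrtho (hb 2 0 (by decide))
theorem r21 : ι Q (b 2) * ι Q (b 1) = -(ι Q (b 1) * ι Q (b 2)) :=
  ι_mul_ι_comm_of_isOrtho (hb 2 1 (by decide))
theorem r10' (t : CliffordAlgebra Q) :
    ι Q (b 1) * (ι Q (b 0) * t) = -(ι Q (b 0) * (ι Q (b 1) * t)) := by
  rw [← mul_assoc, r10 hb, neg_mul, mul_assoc]
theorem r20' (t : CliffordAlgebra Q) :
    ι Q (b 2) * (ι Q (b 0) * t) = -(ι Q (b 0) * (ι Q (b 2) * t)) := by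
  rw [← mul_assoc, r20 hb, neg_mul, mul_assoc]
theorem r21' (t : CliffordAlgebra Q) :
    ι Q (b 2) * (ι Q (b 1) * t) = -(ι Q (b 1) * (ι Q (b 2) * t)) := by
  rw [← mul_assoc, r21 hb, neg_mul, mul_assoc]

/-- `U * reverse U` is a scalar plus a vector. -/
theorem L1 (c0 c1 c2 c3 c4 c5 c6 c7 : ℝ) :
    ∃ (s : ℝ) (w : V),
      lin Q b c0 c1 c2 c3 c4 c5 c6 c7 * reverse (lin Q b c0 c1 c2 c3 c4 c5 c6 c7) =
        algebraMap ℝ (CliffordAlgebra Q) s + ι Q w := by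
  refine ⟨c0^2 + c1^2 * Q (b 0) + c2^2 * Q (b 1) + c3^2 * Q (b 2) +
      c4^2 * (Q (b 0) * Q (b 1)) + c5^2 * (Q (b 0) * Q (b 2)) + c6^2 * (Q (b 1) * Q (b 2)) +
      c7^2 * (Q (b 0) * (Q (b 1) * Q (b 2))),
    (2*c0*c1 + 2*c2*c4*Q (b 1) + 2*c3*c5*Q (b 2) + 2*c6*c7*(Q (b 1)*Q (b 2))) • b 0 +
    ((2*c0*c2 - 2*c1*c4*Q (b 0) + 2*c3*c6*Q (b 2) - 2*c5*c7*(Q (b 0)*Q (b 2))) • b 1 +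
     (2*c0*c3 - 2*c1*c5*Q (b 0) - 2*c2*c6*Q (b 1) + 2*c4*c7*(Q (b 0)*Q (b 1))) • b 2), ?_⟩
  simp only [lin, map_add, map_smul, map_one, map_mul, map_neg, reverse.map_mul,
    reverse_ι, reverse.map_one, involute_ι, AlgHom.commutes,
    Algebra.algebraMap_eq_smul_one, mul_add, add_mul, smul_mul_assoc, mul_smul_comm,
    smul_smul, mul_one, one_mul, mul_neg, neg_mul, smul_neg, neg_neg, smul_add, mul_assoc,
    r00, r11, r22, r00', r11', r22', r10 hb, r20 hb, r21 hb, r10' hb, r20' hb, r21' hb]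
  module

/-- `reverse U * involute U` is a scalar plus a pseudoscalar. -/
theorem L2 (c0 c1 c2 c3 c4 c5 c6 c7 : ℝ) :
    ∃ (a t : ℝ),
      reverse (lin Q b c0 c1 c2 c3 c4 c5 c6 c7) * involute (lin Q b c0 c1 c2 c3 c4 c5 c6 c7) =
        algebraMap ℝ (CliffordAlgebra Q) a + t • (ι Q (b 0) * (ι Q (b 1) * ι Q (b 2))) := by
  refine ⟨c0^2 - c1^2 * Q (b 0) - c2^2 * Q (b 1) - c3^2 * Q (b 2) +
      c4^2 * (Q (b 0) * Q (b 1)) + c5^2 * (Q (b 0) * Q (b 2)) + c6^2 * (Q (b 1) * Q (b 2)) -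
      c7^2 * (Q (b 0) * (Q (b 1) * Q (b 2))),
    2*c3*c4 - 2*c2*c5 + 2*c1*c6 - 2*c0*c7, ?_⟩
  simp only [lin, map_add, map_smul, map_one, map_mul, map_neg, reverse.map_mul,
    reverse_ι, reverse.map_one, involute_ι, AlgHom.commutes,
    Algebra.algebraMap_eq_smul_one, mul_add, add_mul, smul_mul_assoc, mul_smul_comm,
    smul_smul, mul_one, one_mul, mul_neg, neg_mul, smul_neg, neg_neg, smul_add, mul_assoc,
    r00, r11, r22, r00', r11', r22', r10 hb, r20 hb, r21 hb, r10' hb, r20' hb, r21' hb]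
  module

/-- `U` commutes with its Clifford conjugate. -/
theorem L4 (c0 c1 c2 c3 c4 c5 c6 c7 : ℝ) :
    lin Q b c0 c1 c2 c3 c4 c5 c6 c7 * reverse (involute (lin Q b c0 c1 c2 c3 c4 c5 c6 c7)) =
      reverse (involute (lin Q b c0 c1 c2 c3 c4 c5 c6 c7)) * lin Q b c0 c1 c2 c3 c4 c5 c6 c7 := by
  simp only [lin, map_add, map_smul, map_one, map_mul, map_neg, reverse.map_mul,
    reverse_ι, reverse.map_one, involute_ι, AlgHom.commutes,
    Algebra.algebraMap_eq_smul_one, mul_add, add_mul, smul_mul_assoc, mul_smul_comm,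
    smul_smul, mul_one, one_mul, mul_neg, neg_mul, smul_neg, neg_neg, smul_add, mul_assoc,
    r00, r11, r22, r00', r11', r22', r10 hb, r20 hb, r21 hb, r10' hb, r20' hb, r21' hb]
  module

/-- `reverse U` commutes with `involute U`. -/
theorem L5 (c0 c1 c2 c3 c4 c5 c6 c7 : ℝ) :
    reverse (lin Q b c0 c1 c2 c3 c4 c5 c6 c7) * involute (lin Q b c0 c1 c2 c3 c4 c5 c6 c7) =
      involute (lin Q b c0 c1 c2 c3 c4 c5 c6 c7) * reverse (lin Q b c0 c1 c2 c3 c4 c5 c6 c7) := by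
  simp only [lin, map_add, map_smul, map_one, map_mul, map_neg, reverse.map_mul,
    reverse_ι, reverse.map_one, involute_ι, AlgHom.commutes,
    Algebra.algebraMap_eq_smul_one, mul_add, add_mul, smul_mul_assoc, mul_smul_comm,
    smul_smul, mul_one, one_mul, mul_neg, neg_mul, smul_neg, neg_neg, smul_add, mul_assoc,
    r00, r11, r22, r00', r11', r22', r10 hb, r20 hb, r21 hb, r10' hb, r20' hb, r21' hb]
  module

end

section
variable (B : Module.Basis (Fin 3) ℝ V) (hb : ∀ i j : Fin 3, i ≠ j → Q.IsOrtho (B i) (B j))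
include hb

/-- The pseudoscalar is central. -/
theorem central (u : CliffordAlgebra Q) :
    u * (ι Q (B 0) * (ι Q (B 1) * ι Q (B 2))) =
      (ι Q (B 0) * (ι Q (B 1) * ι Q (B 2))) * u := by
  have h3 : ∀ j : Fin 3, ι Q (B j) * (ι Q (B 0) * (ι Q (B 1) * ι Q (B 2))) =
      (ι Q (B 0) * (ι Q (B 1) * ι Q (B 2))) * ι Q (B j) := by
    have n0 : (ι Q (B 0) * (ι Q (B 1) * ι Q (B 2))) * ι Q (B 0) =
        ι Q (B 0) * ((ι Q (B 0) * (ι Q (B 1) * ι Q (B 2)))) := by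
      simp only [mul_add, add_mul, smul_mul_assoc, mul_smul_comm,
        smul_smul, mul_one, one_mul, mul_neg, neg_mul, smul_neg, neg_neg, smul_add, mul_assoc,
        r00, r11, r22, r00', r11', r22', r10 hb, r20 hb, r21 hb, r10' hb, r20' hb, r21' hb]
    have n1 : (ι Q (B 0) * (ι Q (B 1) * ι Q (B 2))) * ι Q (B 1) =
        ι Q (B 1) * ((ι Q (B 0) * (ι Q (B 1) * ι Q (B 2)))) := by
      simp only [mul_add, add_mul, smul_mul_assoc, mul_smul_comm,
        smul_smul, mul_one, one_mul, mul_neg, neg_mul, smul_neg, neg_neg, smul_add, mul_assoc,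
        r00, r11, r22, r00', r11', r22', r10 hb, r20 hb, r21 hb, r10' hb, r20' hb, r21' hb]
    have n2 : (ι Q (B 0) * (ι Q (B 1) * ι Q (B 2))) * ι Q (B 2) =
        ι Q (B 2) * ((ι Q (B 0) * (ι Q (B 1) * ι Q (B 2)))) := by
      simp only [mul_add, add_mul, smul_mul_assoc, mul_smul_comm,
        smul_smul, mul_one, one_mul, mul_neg, neg_mul, smul_neg, neg_neg, smul_add, mul_assoc,
        r00, r11, r22, r00', r11', r22', r10 hb, r20 hb, r21 hb, r10' hb, r20' hb, r21' hb]
    intro j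
    match j with
    | 0 => exact n0.symm
    | 1 => exact n1.symm
    | 2 => exact n2.symm
  induction u using CliffordAlgebra.induction with
  | algebraMap r => rw [← Algebra.commutes]
  | ι m =>
    rw [← Module.Basis.sum_repr B m]
    simp only [map_sum, map_add, map_smul, add_mul, mul_add, Finset.sum_mul, Finset.mul_sum, smul_mul_assoc,
      mul_smul_comm, Fin.sum_univ_three, h3]
  | mul x y hx hy => rw [mul_assoc, hy, ← mul_assoc, hx, mul_assoc]
  | add x y hx hy => rw [add_mul, mul_add, hx, hy]

/-- Every element of the Clifford algebra is a combination of the 8 monomials. -/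
theorem span (u : CliffordAlgebra Q) :
    ∃ c0 c1 c2 c3 c4 c5 c6 c7 : ℝ, u = lin Q B c0 c1 c2 c3 c4 c5 c6 c7 := by
  induction u using CliffordAlgebra.right_induction with
  | algebraMap r =>
    exact ⟨r, 0, 0, 0, 0, 0, 0, 0, by simp [lin, Algebra.algebraMap_eq_smul_one]⟩
  | add x y hx hy =>
    obtain ⟨a0, a1, a2, a3, a4, a5, a6, a7, rfl⟩ := hx
    obtain ⟨b0, b1, b2, b3, b4, b5, b6, b7, rfl⟩ := hy
    refine ⟨a0+b0, a1+b1, a2+b2, a3+b3, a4+b4, a5+b5, a6+b6, a7+b7, ?_⟩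
    simp only [lin, add_smul]
    abel
  | mul_ι m x hx =>
    obtain ⟨c0, c1, c2, c3, c4, c5, c6, c7, rfl⟩ := hx
    set d0 := B.repr m 0 with hd0
    set d1 := B.repr m 1 with hd1
    set d2 := B.repr m 2 with hd2
    refine ⟨c1*Q (B 0)*d0 + c2*Q (B 1)*d1 + c3*Q (B 2)*d2,
      c0*d0 + c4*Q (B 1)*d1 + c5*Q (B 2)*d2,
      c0*d1 - c4*Q (B 0)*d0 + c6*Q (B 2)*d2,
      c0*d2 - c5*Q (B 0)*d0 - c6*Q (B 1)*d1,
      c1*d1 - c2*d0 + c7*Q (B 2)*d2,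
      c1*d2 - c3*d0 - c7*Q (B 1)*d1,
      c2*d2 - c3*d1 + c7*Q (B 0)*d0,
      c4*d2 - c5*d1 + c6*d0, ?_⟩
    have hm : m = d0 • B 0 + d1 • B 1 + d2 • B 2 := by
      rw [hd0, hd1, hd2]
      have := B.sum_repr m
      rw [Fin.sum_univ_three] at this
      exact this.symm
    rw [hm]
    simp only [lin, map_add, map_smul, mul_add, add_mul, smul_mul_assoc, mul_smul_comm,
      smul_smul, mul_one, one_mul, mul_neg, neg_mul, smul_neg, neg_neg, smul_add, mul_assoc,
      r00, r11, r22, r00', r11', r22', r10 hb, r20 hb, r21 hb, r10' hb, r20' hb, r21' hb]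
    module

end

/-- `(s + v)(s - v) = s^2 - Q v`. -/
theorem sqdiff (s : ℝ) (w : V) :
    (algebraMap ℝ (CliffordAlgebra Q) s + ι Q w) * (algebraMap ℝ (CliffordAlgebra Q) s - ι Q w) =
      algebraMap ℝ (CliffordAlgebra Q) (s * s - Q w) := by
  have hc : ι Q w * algebraMap ℝ (CliffordAlgebra Q) s =
      algebraMap ℝ (CliffordAlgebra Q) s * ι Q w := (Algebra.commutes _ _).symm
  rw [add_mul, mul_sub, mul_sub, hc, ι_sq_scalar, sub_add_sub_cancel, ← map_mul, ← map_sub]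

end CliffordAux

theorem stmt_11 {V : Type*} [AddCommGroup V] [Module ℝ V] (Q : QuadraticForm ℝ V)
    (h : Module.finrank ℝ V = 3) (U : CliffordAlgebra Q) :
    U * reverse U * involute U * reverse (involute U) ∈
      Set.range (algebraMap ℝ (CliffordAlgebra Q)) ∧
    U * reverse U * involute U * reverse (involute U) =
      reverse (involute U) * reverse U * involute U * U ∧
    reverse U * involute U * reverse (involute U) =
      involute U * reverse U * reverse (involute U) ∧
    reverse U * involute U * reverse (involute U) =
      reverse (involute U) * involute U * reverse U ∧
    reverse U * involute U * reverse (involute U) =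
      reverse (involute U) * reverse U * involute U := by
  have : FiniteDimensional ℝ V := FiniteDimensional.of_finrank_eq_succ h
  obtain ⟨v, hv⟩ := LinearMap.BilinForm.exists_orthogonal_basis
    (QuadraticForm.associated_isSymm ℝ Q)
  set B := v.reindex (finCongr h) with hB
  have hb : ∀ i j : Fin 3, i ≠ j → Q.IsOrtho (B i) (B j) := by
    intro i j hij
    rw [hB, Module.Basis.reindex_apply, Module.Basis.reindex_apply]
    exact QuadraticMap.associated_isOrtho.mp (hv (by simp [Fin.ext_iff] at hij ⊢; omega))
  obtain ⟨c0, c1, c2, c3, c4, c5, c6, c7, rfl⟩ := CliffordAux.span B hb U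
  set L := CliffordAux.lin Q B c0 c1 c2 c3 c4 c5 c6 c7 with hL
  obtain ⟨s, w, hX⟩ := CliffordAux.L1 hb c0 c1 c2 c3 c4 c5 c6 c7
  obtain ⟨a, t, hM⟩ := CliffordAux.L2 hb c0 c1 c2 c3 c4 c5 c6 c7
  rw [← hL] at hX hM
  have hL4 : L * reverse (involute L) = reverse (involute L) * L := CliffordAux.L4 hb _ _ _ _ _ _ _ _
  have hL5 : reverse L * involute L = involute L * reverse L := CliffordAux.L5 hb _ _ _ _ _ _ _ _
  -- centrality of `algebraMap a + t • E`
  have hcen : ∀ u : CliffordAlgebra Q,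
      u * (algebraMap ℝ (CliffordAlgebra Q) a + t • (ι Q (B 0) * (ι Q (B 1) * ι Q (B 2)))) =
      (algebraMap ℝ (CliffordAlgebra Q) a + t • (ι Q (B 0) * (ι Q (B 1) * ι Q (B 2)))) * u := by
    intro u
    rw [mul_add, add_mul, mul_smul_comm, smul_mul_assoc, CliffordAux.central B hb u, Algebra.commutes]
  -- `involute U * reverse (involute U) = s - w`
  have hY : involute L * reverse (involute L) = algebraMap ℝ (CliffordAlgebra Q) s - ι Q w := by
    have h' := congrArg involute hX
    rw [map_mul, map_add, AlgHom.commutes, involute_ι] at h'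
    rw [reverse_involute, sub_eq_add_neg]
    exact h'
  refine ⟨?_, ?_, ?_, ?_, ?_⟩
  · refine ⟨s * s - Q w, ?_⟩
    rw [mul_assoc (L * reverse L), hX, hY, CliffordAux.sqdiff]
  · rw [mul_assoc L (reverse L) (involute L), hM, hcen L, mul_assoc, hL4, ← mul_assoc,
      ← hcen (reverse (involute L)), mul_assoc (reverse (involute L)), ← hM,
      ← mul_assoc (reverse (involute L)), ← mul_assoc (reverse (involute L))]
  · rw [hL5]
  · rw [hM, ← hcen (reverse (involute L)), mul_assoc (reverse (involute L)), ← hM, hL5,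
      ← mul_assoc]
  · rw [hM, ← hcen (reverse (involute L)), mul_assoc (reverse (involute L)), ← hM,
      ← mul_assoc]
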